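/- Let ξ ∈ ℝ, α ∈ ℝ, and c > 0 with 6|α|c < 1, and define G: ℝ → ℝ by G(x) = x + α(x−ξ)|x−ξ| φ((x−ξ)/c). Then G is continuously differentiable with G'(x) ≥ 1 − 6|α|c > 0 for all x ∈ ℝ, G is strictly increasing, and G is a bijection from ℝ onto ℝ. -/

import Mathlib

/-- The bump function `φ(u) = (1+u)³(1-u)³` for `|u| ≤ 1` and `φ(u) = 0` otherwise. -/
noncomputable def phi (u : ℝ) : ℝ := if |u| ≤ 1 then (1 + u) ^ 3 * (1 - u) ^ 3 else 0

/-- The transform `G(x) = x + α(x-ξ)|x-ξ| φ((x-ξ)/c)`. -/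
noncomputable def transformG (ξ α c : ℝ) (x : ℝ) : ℝ :=
  x + α * ((x - ξ) * |x - ξ| * phi ((x - ξ) / c))

open Filter


lemma hasDerivAt_mul_abs (x : ℝ) : HasDerivAt (fun y : ℝ => y * |y|) (2 * |x|) x := by
  rcases lt_trichotomy x 0 with hx | hx | hx
  · have h1 : HasDerivAt (fun y : ℝ => -(y * y)) (2 * |x|) x := by
      have : HasDerivAt (fun y : ℝ => -(y * y)) (-(1 * x + x * 1)) x :=
        ((hasDerivAt_id x).mul (hasDerivAt_id x)).neg
      convert this using 1
      simp [abs_of_neg hx]; ring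
    refine h1.congr_of_eventuallyEq ?_
    filter_upwards [Iio_mem_nhds hx] with y (hy : y < 0)
    rw [abs_of_neg hy]; ring
  · subst hx
    rw [hasDerivAt_iff_tendsto_slope]
    simp only [abs_zero, mul_zero]
    refine squeeze_zero_norm' (a := fun y : ℝ => |y|) ?_ ?_
    · filter_upwards [self_mem_nhdsWithin] with y (hy : y ≠ 0)
      rw [slope_def_field]
      rw [Real.norm_eq_abs]
      rw [show (y * |y| - 0 * |0|) / (y - 0) = |y| * (y / y) by ring]
      rw [div_self hy]
      simp [abs_abs]
    · have : ContinuousAt (fun y : ℝ => |y|) 0 := continuous_abs.continuousAt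
      simpa using this.continuousWithinAt.tendsto
  · have h1 : HasDerivAt (fun y : ℝ => y * y) (2 * |x|) x := by
      have : HasDerivAt (fun y : ℝ => y * y) (1 * x + x * 1) x :=
        (hasDerivAt_id x).mul (hasDerivAt_id x)
      convert this using 1
      simp [abs_of_pos hx]; ring
    refine h1.congr_of_eventuallyEq ?_
    filter_upwards [Ioi_mem_nhds hx] with y (hy : 0 < y)
    rw [abs_of_pos hy]

lemma hasDerivAt_maxcube (t : ℝ) :
    HasDerivAt (fun s : ℝ => max s 0 ^ 3) (3 * max t 0 ^ 2) t := by
  rcases lt_trichotomy t 0 with ht | ht | ht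
  · have h1 : HasDerivAt (fun _ : ℝ => (0 : ℝ)) (3 * max t 0 ^ 2) t := by
      simpa [max_eq_right ht.le] using (hasDerivAt_const t (0 : ℝ))
    refine h1.congr_of_eventuallyEq ?_
    filter_upwards [Iio_mem_nhds ht] with y (hy : y < 0)
    simp [max_eq_right hy.le]
  · subst ht
    rw [hasDerivAt_iff_tendsto_slope]
    simp only [max_self, ne_eq]
    norm_num
    refine squeeze_zero_norm' (a := fun y : ℝ => y ^ 2) ?_ ?_
    · filter_upwards [self_mem_nhdsWithin] with y (hy : y ≠ 0)
      rw [slope_def_field, Real.norm_eq_abs]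
      simp only [max_self]
      rcases le_or_gt y 0 with h | h
      · rw [max_eq_right h]
        simp [abs_of_nonneg (sq_nonneg y)]
        positivity
      · rw [max_eq_left h.le]
        rw [show (y ^ 3 - 0 ^ 3) / (y - 0) = y ^ 2 * (y / y) by ring, div_self hy]
        simp [abs_of_pos (pow_pos h 2)]
    · have : ContinuousAt (fun y : ℝ => y ^ 2) 0 := by fun_prop
      simpa using this.continuousWithinAt.tendsto
  · have h1 : HasDerivAt (fun s : ℝ => s ^ 3) (3 * max t 0 ^ 2) t := by
      simpa [max_eq_left ht.le] using (hasDerivAt_pow 3 t)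
    refine h1.congr_of_eventuallyEq ?_
    filter_upwards [Ioi_mem_nhds ht] with y (hy : 0 < y)
    simp [max_eq_left hy.le]

lemma phi_eq : phi = fun u : ℝ => max (1 - u ^ 2) 0 ^ 3 := by
  funext u
  unfold phi
  split_ifs with h
  · rw [max_eq_left (by nlinarith [abs_nonneg u, sq_abs u, abs_le.1 h])]
    ring
  · rw [max_eq_right (by nlinarith [sq_abs u, (not_le.1 h)])]
    simp

noncomputable def Gd (ξ α c : ℝ) (x : ℝ) : ℝ :=
  1 + α * (2 * |x - ξ| * max (1 - ((x - ξ) / c) ^ 2) 0 ^ 3 +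
    (x - ξ) * |x - ξ| * (3 * max (1 - ((x - ξ) / c) ^ 2) 0 ^ 2 * (-(2 * (x - ξ) / c ^ 2))))

lemma transformG_hasDerivAt (ξ α c : ℝ) (hc : c ≠ 0) (x : ℝ) :
    HasDerivAt (transformG ξ α c) (Gd ξ α c x) x := by
  have hsub : HasDerivAt (fun y : ℝ => y - ξ) 1 x := (hasDerivAt_id x).sub_const ξ
  have h1 : HasDerivAt (fun y : ℝ => (y - ξ) * |y - ξ|) (2 * |x - ξ|) x := by
    have := (hasDerivAt_mul_abs (x - ξ)).comp x hsub
    simpa [Function.comp_def] using this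
  have h2 : HasDerivAt (fun y : ℝ => 1 - ((y - ξ) / c) ^ 2) (-(2 * (x - ξ) / c ^ 2)) x := by
    have hq : HasDerivAt (fun y : ℝ => ((y - ξ) / c) ^ 2) (2 * ((x - ξ) / c) * (1 / c)) x := by
      have := (hsub.div_const c).pow 2
      simpa [Pi.pow_def, mul_comm, mul_assoc, mul_left_comm] using this
    have : HasDerivAt (fun y : ℝ => 1 - ((y - ξ) / c) ^ 2) (-(2 * ((x - ξ) / c) * (1 / c))) x :=
      hq.const_sub 1
    convert this using 1
    ring
  have h3 : HasDerivAt (fun y : ℝ => max (1 - ((y - ξ) / c) ^ 2) 0 ^ 3)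
      (3 * max (1 - ((x - ξ) / c) ^ 2) 0 ^ 2 * (-(2 * (x - ξ) / c ^ 2))) x :=
    (hasDerivAt_maxcube _).comp x h2
  have h4 := (h1.mul h3).const_mul α
  have h5 := (hasDerivAt_id x).add h4
  have : transformG ξ α c = fun y : ℝ =>
      y + α * ((y - ξ) * |y - ξ| * max (1 - ((y - ξ) / c) ^ 2) 0 ^ 3) := by
    funext y; simp [transformG, phi_eq]
  rw [this]
  exact h5

lemma Gd_bound (ξ α c : ℝ) (hc : 0 < c) (x : ℝ) :
    |2 * |x - ξ| * max (1 - ((x - ξ) / c) ^ 2) 0 ^ 3 +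
    (x - ξ) * |x - ξ| * (3 * max (1 - ((x - ξ) / c) ^ 2) 0 ^ 2 * (-(2 * (x - ξ) / c ^ 2)))| ≤
      6 * c := by
  set v := x - ξ with hv
  rcases le_or_gt (1 - (v / c) ^ 2) 0 with hm | hm
  · rw [max_eq_right hm]
    norm_num
    positivity
  · rw [max_eq_left hm.le]
    have hc2 : (0:ℝ) < c ^ 2 := by positivity
    have hvc2 : v ^ 2 < c ^ 2 := by
      have hlt : (v / c) ^ 2 < 1 := by linarith
      have := mul_lt_mul_of_pos_right hlt hc2
      rw [div_pow] at this
      rw [div_mul_cancel₀ _ (ne_of_gt hc2)] at this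
      linarith
    have hva : 0 ≤ |v| := abs_nonneg v
    have hvc : |v| ≤ c := by nlinarith [sq_abs v]
    have hw0 : 0 ≤ c ^ 2 - v ^ 2 := by linarith
    have hw1 : c ^ 2 - v ^ 2 ≤ c ^ 2 := by nlinarith [sq_nonneg v]
    have e1 : |v| * (c ^ 2 - v ^ 2) ^ 3 ≤ c * (c ^ 2) ^ 3 :=
      mul_le_mul hvc (pow_le_pow_left₀ hw0 hw1 3) (by positivity) hc.le
    have e2 : v ^ 2 * |v| ≤ c ^ 2 * c :=
      mul_le_mul (le_of_lt hvc2) hvc hva (by positivity)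
    have e3 : v ^ 2 * |v| * (c ^ 2 - v ^ 2) ^ 2 ≤ c ^ 2 * c * (c ^ 2) ^ 2 :=
      mul_le_mul e2 (pow_le_pow_left₀ hw0 hw1 2) (by positivity) (by positivity)
    have n1 : 0 ≤ |v| * (c ^ 2 - v ^ 2) ^ 3 := by positivity
    have n3 : 0 ≤ v ^ 2 * |v| * (c ^ 2 - v ^ 2) ^ 2 := by positivity
    rw [show (1 - (v / c) ^ 2) = (c ^ 2 - v ^ 2) / c ^ 2 by field_simp]
    rw [div_pow, div_pow]
    rw [show 2 * |v| * ((c ^ 2 - v ^ 2) ^ 3 / (c ^ 2) ^ 3) +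
        v * |v| * (3 * ((c ^ 2 - v ^ 2) ^ 2 / (c ^ 2) ^ 2) * (-(2 * v / c ^ 2))) =
        (2 * (|v| * (c ^ 2 - v ^ 2) ^ 3) - 6 * (v ^ 2 * |v| * (c ^ 2 - v ^ 2) ^ 2)) / (c ^ 2) ^ 3 by
      field_simp; ring]
    rw [abs_le]
    constructor
    · rw [le_div_iff₀ (by positivity)]
      nlinarith [e3, n1]
    · rw [div_le_iff₀ (by positivity)]
      nlinarith [e1, n3]


lemma transformG_sub_bound (ξ α c : ℝ) (hc : 0 < c) (x : ℝ) :
    |transformG ξ α c x - x| ≤ |α| * c ^ 2 := by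
  have : transformG ξ α c x - x =
      α * ((x - ξ) * |x - ξ| * max (1 - ((x - ξ) / c) ^ 2) 0 ^ 3) := by
    simp [transformG, phi_eq]
  rw [this, abs_mul]
  refine mul_le_mul_of_nonneg_left ?_ (abs_nonneg α)
  set v := x - ξ with hv
  rcases le_or_gt (1 - (v / c) ^ 2) 0 with hm | hm
  · rw [max_eq_right hm]
    norm_num
    positivity
  · rw [max_eq_left hm.le]
    have hc2 : (0:ℝ) < c ^ 2 := by positivity
    have hvc2 : v ^ 2 < c ^ 2 := by
      have hlt : (v / c) ^ 2 < 1 := by linarith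
      have := mul_lt_mul_of_pos_right hlt hc2
      rw [div_pow] at this
      rw [div_mul_cancel₀ _ (ne_of_gt hc2)] at this
      linarith
    have hM1 : (1 - (v / c) ^ 2) ≤ 1 := by nlinarith [sq_nonneg (v / c)]
    have hM3 : (1 - (v / c) ^ 2) ^ 3 ≤ 1 := by
      calc (1 - (v / c) ^ 2) ^ 3 ≤ 1 ^ 3 := pow_le_pow_left₀ hm.le hM1 3
      _ = 1 := one_pow 3
    have h1 : |v * |v| * (1 - (v / c) ^ 2) ^ 3| = v ^ 2 * (1 - (v / c) ^ 2) ^ 3 := by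
      rw [abs_mul, abs_mul, abs_abs, abs_of_nonneg (pow_nonneg hm.le 3)]
      rw [← abs_mul, ← sq, abs_of_nonneg (sq_nonneg v)]
    rw [h1]
    calc v ^ 2 * (1 - (v / c) ^ 2) ^ 3 ≤ c ^ 2 * 1 :=
        mul_le_mul hvc2.le hM3 (pow_nonneg hm.le 3) hc2.le
    _ = c ^ 2 := mul_one _

/-- if `6|α|c < 1` then `G` is `C¹` with `G'(x) ≥ 1 - 6|α|c > 0`,
strictly increasing, and a bijection of `ℝ` onto itself. -/
theorem transformG_bijective (ξ α c : ℝ) (hc : 0 < c) (h : 6 * |α| * c < 1) :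
    ContDiff ℝ 1 (transformG ξ α c) ∧
    (∀ x : ℝ, 1 - 6 * |α| * c ≤ deriv (transformG ξ α c) x) ∧
    0 < 1 - 6 * |α| * c ∧
    StrictMono (transformG ξ α c) ∧
    Function.Bijective (transformG ξ α c) := by
  have hD : ∀ x : ℝ, HasDerivAt (transformG ξ α c) (Gd ξ α c x) x :=
    transformG_hasDerivAt ξ α c (ne_of_gt hc)
  have hderiv : deriv (transformG ξ α c) = Gd ξ α c := funext fun x => (hD x).deriv
  have hbound : ∀ x : ℝ, 1 - 6 * |α| * c ≤ Gd ξ α c x := by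
    intro x
    have hb := Gd_bound ξ α c hc x
    set E := 2 * |x - ξ| * max (1 - ((x - ξ) / c) ^ 2) 0 ^ 3 +
      (x - ξ) * |x - ξ| * (3 * max (1 - ((x - ξ) / c) ^ 2) 0 ^ 2 * (-(2 * (x - ξ) / c ^ 2)))
    have h2 : |α * E| ≤ |α| * (6 * c) := by
      rw [abs_mul]
      exact mul_le_mul_of_nonneg_left hb (abs_nonneg α)
    have h3 : -(|α| * (6 * c)) ≤ α * E := (abs_le.1 h2).1
    have : Gd ξ α c x = 1 + α * E := rfl
    rw [this]
    linarith
  have hpos : 0 < 1 - 6 * |α| * c := by linarith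
  have hC1 : ContDiff ℝ 1 (transformG ξ α c) := by
    rw [contDiff_one_iff_deriv]
    refine ⟨fun x => (hD x).differentiableAt, ?_⟩
    rw [hderiv]
    unfold Gd
    continuity
  have hmono : StrictMono (transformG ξ α c) := by
    apply strictMono_of_deriv_pos
    intro x
    rw [hderiv]
    linarith [hbound x]
  refine ⟨hC1, fun x => by rw [hderiv]; exact hbound x, hpos, hmono, hmono.injective, ?_⟩
  have htop : Filter.Tendsto (transformG ξ α c) Filter.atTop Filter.atTop := by
    refine tendsto_atTop_mono (f := fun x : ℝ => x + -(|α| * c ^ 2)) ?_ ?_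
    · intro x
      have := (abs_le.1 (transformG_sub_bound ξ α c hc x)).1
      show x + -(|α| * c ^ 2) ≤ transformG ξ α c x
      linarith
    · exact tendsto_atTop_add_const_right _ _ tendsto_id
  have hbot : Filter.Tendsto (transformG ξ α c) Filter.atBot Filter.atBot := by
    refine tendsto_atBot_mono (f := fun x : ℝ => x + |α| * c ^ 2) ?_ ?_
    · intro x
      have := (abs_le.1 (transformG_sub_bound ξ α c hc x)).2
      show transformG ξ α c x ≤ x + |α| * c ^ 2
      linarith
    · exact tendsto_atBot_add_const_right _ _ tendsto_id
  exact hC1.continuous.surjective htop hbot
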